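/- For every integer k ≥ 2 and every real θ with 0 ≤ θ ≤ (k−2)/(2k−2), one has (1 − θ)·(1 + 2θ/(k+2−2θ))^k ≥ 1. -/

import Mathlib

/-- For every integer `k ≥ 2` and real `0 ≤ θ ≤ (k-2)/(2k-2)`,
`(1-θ)(1 + 2θ/(k+2-2θ))^k ≥ 1`. -/
theorem key_inequality (k : ℕ) (hk : 2 ≤ k) (θ : ℝ)
    (h0 : 0 ≤ θ) (h1 : θ ≤ ((k : ℝ) - 2) / (2 * k - 2)) :
    1 ≤ (1 - θ) * (1 + 2 * θ / ((k : ℝ) + 2 - 2 * θ)) ^ k := by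
  have hk2 : (2:ℝ) ≤ (k:ℝ) := by exact_mod_cast hk
  have hden : (0:ℝ) < 2*(k:ℝ)-2 := by linarith
  have hθ' : θ*(2*(k:ℝ)-2) ≤ (k:ℝ)-2 := (le_div_iff₀ hden).mp h1
  have h2θ : 2*θ ≤ 1 := by nlinarith
  have hd : 0 < (k:ℝ)+2-2*θ := by linarith
  set x := 2*θ/((k:ℝ)+2-2*θ) with hxdef
  have hx : 0 ≤ x := div_nonneg (by linarith) hd.le
  have hb : 1 + (k:ℝ)*x ≤ (1+x)^k := by
    have := one_add_mul_le_pow (by linarith : (-2:ℝ) ≤ x) k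
    simpa using this
  have h1θ : 0 < 1-θ := by linarith
  have key : 1 ≤ (1-θ)*(1+(k:ℝ)*x) := by
    have heq : (1-θ)*(1+(k:ℝ)*x) = ((1-θ)*(((k:ℝ)+2-2*θ) + (k:ℝ)*(2*θ)))/((k:ℝ)+2-2*θ) := by
      rw [hxdef, eq_div_iff hd.ne', mul_assoc, add_mul, mul_assoc (k:ℝ), div_mul_cancel₀ _ hd.ne']
      ring
    rw [heq, le_div_iff₀ hd]
    nlinarith [hθ', h0]
  calc (1:ℝ) ≤ (1-θ)*(1+(k:ℝ)*x) := key
    _ ≤ (1-θ)*(1+x)^k := by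
        exact mul_le_mul_of_nonneg_left hb h1θ.le
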